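/- arXiv:0905.0036 — 2 statements merged into one kernel-verified Lean document; each statement's English description precedes it below -/
import Mathlib

section
/- Suppose c₁ₑ ≥ 1 and c₂ₑ > c₂₁·c₁ₑ with all gains positive. Then there exist P₁ᵇ > 0 and P₂^{j} > 0 such that γ(P₁ᵇ/(1 + c₂₁P₂^{j})) − γ(c₁ₑP₁ᵇ/(1 + c₂ₑP₂^{j})) > 0. That is, cooperative jamming by user 2 can make a positive secrecy rate achievable for user 1 even when user 1 alone achieves zero secrecy rate. -/
noncomputable def gamma (x : ℝ) : ℝ := (1/2) * Real.logb 2 (1 + x)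

theorem stmt_3 (c21 c1e c2e : ℝ) (hc21 : 0 < c21) (hc1e : 0 < c1e) (hc2e : 0 < c2e)
    (h1 : 1 ≤ c1e) (h2 : c21 * c1e < c2e) :
    ∃ P1b Pj : ℝ, 0 < P1b ∧ 0 < Pj ∧
      0 < gamma (P1b / (1 + c21 * Pj)) - gamma (c1e * P1b / (1 + c2e * Pj)) := by
  have hd : 0 < c2e - c21 * c1e := by linarith
  set Pj : ℝ := c1e / (c2e - c21 * c1e) with hPj
  have hPjpos : 0 < Pj := div_pos hc1e hd
  have hden1 : 0 < 1 + c21 * Pj := by positivity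
  have hden2 : 0 < 1 + c2e * Pj := by positivity
  refine ⟨1, Pj, one_pos, hPjpos, ?_⟩
  have hPjeq : Pj * (c2e - c21 * c1e) = c1e := div_mul_cancel₀ _ (ne_of_gt hd)
  have key : c1e * 1 / (1 + c2e * Pj) < 1 / (1 + c21 * Pj) := by
    rw [div_lt_div_iff₀ hden2 hden1]
    nlinarith
  have harg2 : 0 < c1e * 1 / (1 + c2e * Pj) := by positivity
  have hlog : Real.logb 2 (1 + c1e * 1 / (1 + c2e * Pj)) <
      Real.logb 2 (1 + 1 / (1 + c21 * Pj)) :=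
    Real.logb_lt_logb one_lt_two (by linarith) (by linarith)
  unfold gamma
  linarith
end

section
/- For the Gaussian wiretap channel with noise injection (channel prefixing): for any P > 0, gains c_e ∈ (0,1), the secrecy rate without jamming, γ(Pᵇ) − γ(c_e Pᵇ) with Pᵇ = P, is at least the rate obtained by splitting power into Pᵇ + Pʲ = P and self-jamming: γ(Pᵇ/(1+Pʲ)) − γ(c_e Pᵇ/(1+c_e Pʲ)) for all Pʲ ∈ [0,P]. That is, when c_e < 1, self channel prefixing (self-jamming) does not increase the single-user Gaussian secrecy rate. -/
theorem stmt_11 (P ce : ℝ) (hP : 0 < P) (hce0 : 0 < ce) (hce1 : ce < 1) :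
    ∀ Pb Pj : ℝ, 0 ≤ Pb → 0 ≤ Pj → Pb + Pj = P →
      gamma (Pb / (1 + Pj)) - gamma (ce * Pb / (1 + ce * Pj)) ≤
        gamma P - gamma (ce * P) := by
  intro Pb Pj hPb hPj hsum
  have h1 : (0:ℝ) < 1 + Pj := by linarith
  have h2 : (0:ℝ) < 1 + ce * Pj := by nlinarith
  have h3 : (0:ℝ) < 1 + P := by linarith
  have h4 : (0:ℝ) < 1 + ce * P := by nlinarith
  have e1 : 1 + Pb / (1 + Pj) = (1 + P) / (1 + Pj) := by
    field_simp; linarith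
  have e2 : 1 + ce * Pb / (1 + ce * Pj) = (1 + ce * P) / (1 + ce * Pj) := by
    field_simp; nlinarith [hsum]
  have l1 : Real.logb 2 ((1 + P) / (1 + Pj)) =
      Real.logb 2 (1 + P) - Real.logb 2 (1 + Pj) :=
    Real.logb_div (ne_of_gt h3) (ne_of_gt h1)
  have l2 : Real.logb 2 ((1 + ce * P) / (1 + ce * Pj)) =
      Real.logb 2 (1 + ce * P) - Real.logb 2 (1 + ce * Pj) :=
    Real.logb_div (ne_of_gt h4) (ne_of_gt h2)
  have hmono : Real.logb 2 (1 + ce * Pj) ≤ Real.logb 2 (1 + Pj) := by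
    gcongr <;> norm_num
    nlinarith
  simp only [gamma, e1, e2, l1, l2]
  linarith
end
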